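/- Let (x_n) be a real sequence and M ⊆ ℕ with Δ(M) < ∞. If M is infinite, then (x_n)_{n∈M} has a unique limit point a, this a satisfies Σ_{n∈M} |x_n − a| = Δ(M), and a is the only point at which the infimum defining Δ(M) is attained. If M is finite, then Σ_{n∈M} |x_n − a| = Δ(M) for every median a of (x_n)_{n∈M}, i.e. every a ∈ ℝ with |{n ∈ M : x_n < a}| = |{n ∈ M : x_n > a}|. -/

import Mathlib

open Filter Topology

/-- `Δ(M) = inf_{a ∈ ℝ} Σ_{n ∈ M} |x_n - a|`, valued in `[0, ∞]`
(an empty sum is `0`). -/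
noncomputable def Delta (x : ℕ → ℝ) (M : Set ℕ) : ENNReal :=
  ⨅ a : ℝ, ∑' n : M, ENNReal.ofReal |x (n : ℕ) - a|

/-- `a` is a limit point of `(x_n)_{n ∈ M}`: some subsequence of `x` with
indices in `M` converges to `a`. -/
def IsLimitPointOn (x : ℕ → ℝ) (M : Set ℕ) (a : ℝ) : Prop :=
  ∃ φ : ℕ → ℕ, StrictMono φ ∧ (∀ k, φ k ∈ M) ∧
    Tendsto (fun k : ℕ => x (φ k)) atTop (nhds a)

/-- If the sum of `|x n - b|` over `M` is finite, then `x → b` along the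
cofinite filter on `M`. -/
lemma tendsto_of_sum_lt_top (x : ℕ → ℝ) (M : Set ℕ) (b : ℝ)
    (h : (∑' n : M, ENNReal.ofReal |x (n : ℕ) - b|) < ⊤) :
    Tendsto (fun n : M => x (n : ℕ)) cofinite (nhds b) := by
  have hs : Summable (fun n : M => ‖x (n : ℕ) - b‖₊) := by
    rw [← ENNReal.tsum_coe_ne_top_iff_summable]
    simpa only [← enorm_eq_nnnorm, Real.enorm_eq_ofReal_abs] using h.ne
  have hs2 : Summable (fun n : M => x (n : ℕ) - b) := by
    rw [← summable_abs_iff]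
    have := NNReal.summable_coe.2 hs
    simpa [Real.norm_eq_abs] using this
  have h0 : Tendsto (fun n : M => x (n : ℕ) - b) cofinite (nhds 0) :=
    hs2.tendsto_cofinite_zero
  have := h0.add_const b
  simpa using this

lemma sum_finite_eq (x : ℕ → ℝ) (M : Set ℕ) (hM : M.Finite) (t : ℝ) :
    (∑' n : M, ENNReal.ofReal |x (n : ℕ) - t|) =
      ENNReal.ofReal (∑ n ∈ hM.toFinset, |x n - t|) := by
  rw [tsum_subtype M (fun n => ENNReal.ofReal |x n - t|), tsum_eq_sum (s := hM.toFinset)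
    (fun n hn => Set.indicator_of_notMem (by simpa using hn) _),
    ENNReal.ofReal_sum_of_nonneg (fun n _ => abs_nonneg _)]
  exact Finset.sum_congr rfl fun n hn =>
    Set.indicator_of_mem (hM.mem_toFinset.1 hn) _

theorem Delta_attained (x : ℕ → ℝ) (M : Set ℕ) (hΔ : Delta x M < ⊤) :
    (M.Infinite → ∃ a : ℝ,
      IsLimitPointOn x M a ∧ (∀ b : ℝ, IsLimitPointOn x M b → b = a) ∧
      (∑' n : M, ENNReal.ofReal |x (n : ℕ) - a|) = Delta x M ∧
      (∀ b : ℝ, (∑' n : M, ENNReal.ofReal |x (n : ℕ) - b|) = Delta x M → b = a)) ∧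
    (M.Finite → ∀ a : ℝ,
      (M ∩ {n : ℕ | x n < a}).ncard = (M ∩ {n : ℕ | a < x n}).ncard →
      (∑' n : M, ENNReal.ofReal |x (n : ℕ) - a|) = Delta x M) := by
  constructor
  · -- infinite case
    intro hMinf
    obtain ⟨a₀, ha₀⟩ : ∃ a : ℝ, (∑' n : M, ENNReal.ofReal |x (n : ℕ) - a|) < ⊤ := by
      rw [Delta, iInf_lt_iff] at hΔ; exact hΔ
    haveI : Infinite M := hMinf.to_subtype
    have htend := tendsto_of_sum_lt_top x M a₀ ha₀
    -- key: finiteness of sum forces b = a₀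
    have key : ∀ b : ℝ, (∑' n : M, ENNReal.ofReal |x (n : ℕ) - b|) < ⊤ → b = a₀ := by
      intro b hb
      exact tendsto_nhds_unique (tendsto_of_sum_lt_top x M b hb) htend
    refine ⟨a₀, ?_, ?_, ?_, ?_⟩
    · -- a₀ is a limit point
      refine ⟨Nat.nth (· ∈ M), Nat.nth_strictMono hMinf, Nat.nth_mem_of_infinite hMinf, ?_⟩
      have hinj : Function.Injective
          (fun k : ℕ => (⟨Nat.nth (· ∈ M) k, Nat.nth_mem_of_infinite hMinf k⟩ : M)) := by
        intro i j hij
        exact (Nat.nth_strictMono hMinf).injective (congrArg Subtype.val hij)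
      have : Tendsto (fun k : ℕ =>
          (⟨Nat.nth (· ∈ M) k, Nat.nth_mem_of_infinite hMinf k⟩ : M)) atTop cofinite := by
        rw [← Nat.cofinite_eq_atTop]; exact hinj.tendsto_cofinite
      exact htend.comp this
    · -- uniqueness of limit point
      rintro b ⟨φ, hφmono, hφmem, hφtend⟩
      have hinj : Function.Injective (fun k : ℕ => (⟨φ k, hφmem k⟩ : M)) := by
        intro i j hij
        exact hφmono.injective (congrArg Subtype.val hij)
      have h1 : Tendsto (fun k : ℕ => (⟨φ k, hφmem k⟩ : M)) atTop cofinite := by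
        rw [← Nat.cofinite_eq_atTop]; exact hinj.tendsto_cofinite
      exact tendsto_nhds_unique hφtend (htend.comp h1)
    · -- sum at a₀ equals Delta
      refine le_antisymm ?_ (iInf_le _ a₀)
      refine le_iInf fun b => ?_
      rcases lt_or_ge (∑' n : M, ENNReal.ofReal |x (n : ℕ) - b|) ⊤ with hb | hb
      · rw [key b hb]
      · exact le_top.trans hb
    · -- uniqueness of minimizer
      intro b hb
      exact key b (hb ▸ hΔ)
  · -- finite case
    intro hM a hcard
    set F := hM.toFinset with hF
    -- real inequality: a minimizes the sum
    have hreal : ∀ b : ℝ, ∑ n ∈ F, |x n - a| ≤ ∑ n ∈ F, |x n - b| := by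
      intro b
      classical
      set ε : ℕ → ℝ := fun n => if x n < a then 1 else if a < x n then -1 else 0 with hε
      have h1 : ∀ n, |x n - a| + ε n * (b - a) ≤ |x n - b| := by
        intro n
        have hb1 := le_abs_self (x n - b)
        have hb2 := neg_abs_le (x n - b)
        rcases lt_trichotomy (x n) a with h | h | h
        · rw [hε]; simp only [if_pos h]
          rw [abs_of_neg (by linarith : x n - a < 0)]; linarith
        · rw [hε]; simp only [h, lt_self_iff_false, if_neg (lt_irrefl a), if_false]
          simp [h]
        · rw [hε]; simp only [if_neg (not_lt.2 h.le), if_pos h]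
          rw [abs_of_pos (by linarith : 0 < x n - a)]; linarith
      have hsplit : ∀ n, ε n = (if x n < a then (1:ℝ) else 0) - (if a < x n then (1:ℝ) else 0) := by
        intro n
        rcases lt_trichotomy (x n) a with h | h | h <;>
          simp [hε, h, not_lt.2 h.le, lt_irrefl, le_of_lt]
      have hc1 : (M ∩ {n : ℕ | x n < a}) = ↑(F.filter (fun n => x n < a)) := by
        ext n; simp [hF, Set.Finite.mem_toFinset]
      have hc2 : (M ∩ {n : ℕ | a < x n}) = ↑(F.filter (fun n => a < x n)) := by
        ext n; simp [hF, Set.Finite.mem_toFinset]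
      have hcards : (F.filter (fun n => x n < a)).card = (F.filter (fun n => a < x n)).card := by
        rw [hc1, hc2, Set.ncard_coe_finset, Set.ncard_coe_finset] at hcard
        exact hcard
      have h2 : ∑ n ∈ F, ε n = 0 := by
        calc ∑ n ∈ F, ε n
            = ∑ n ∈ F, ((if x n < a then (1:ℝ) else 0) - (if a < x n then (1:ℝ) else 0)) :=
              Finset.sum_congr rfl fun n _ => hsplit n
          _ = (∑ n ∈ F, if x n < a then (1:ℝ) else 0) - (∑ n ∈ F, if a < x n then (1:ℝ) else 0) :=
              Finset.sum_sub_distrib _ _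
          _ = 0 := by
              rw [Finset.sum_boole, Finset.sum_boole, hcards]; ring
      calc ∑ n ∈ F, |x n - a|
          = ∑ n ∈ F, (|x n - a| + ε n * (b - a)) := by
            rw [Finset.sum_add_distrib, ← Finset.sum_mul, h2, zero_mul, add_zero]
        _ ≤ ∑ n ∈ F, |x n - b| := Finset.sum_le_sum fun n _ => h1 n
    refine le_antisymm ?_ (iInf_le _ a)
    refine le_iInf fun b => ?_
    rw [sum_finite_eq x M hM a, sum_finite_eq x M hM b]
    exact ENNReal.ofReal_le_ofReal (hreal b)
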